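/- The quantity φ(g,S) := β_{g(S)}/β_S (with notation as above) is independent of the choice of the system of representatives S of P(W), and g ↦ φ(g) := φ(g,S) is a group homomorphism from GL(W) to F^*. -/
import Mathlib


/-- `S` is a system of representatives for the projective space
`P(W) = (W \ {0}) / Fˣ`. -/
def IsProjRepSystem (F : Type*) {W : Type*} [Field F] [AddCommGroup W] [Module F W]
    (S : Finset W) : Prop :=
  (0 : W) ∉ S ∧ ∀ w : W, w ≠ 0 → ∃! s : W, s ∈ S ∧ ∃ c : F, c ≠ 0 ∧ w = c • s

lemma key {F L W : Type*} [Field F] [Field L] [Algebra F L]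
    [AddCommGroup W] [Module F W] [Finite W]
    (S T : Finset W) (hS : IsProjRepSystem F S) (hT : IsProjRepSystem F T)
    (f : W →ₗ[F] W) (hf : Function.Injective f) :
    ∃ d : L, d ≠ 0 ∧ ∀ h : W →ₗ[F] L,
      ∏ s ∈ S, h (f s) = d * ∏ t ∈ T, h t := by
  have hS0 : ∀ s ∈ S, s ≠ (0 : W) := fun s hs h0 => hS.1 (h0 ▸ hs)
  have hfs : ∀ s ∈ S, f s ≠ 0 := fun s hs h0 =>
    hS0 s hs (hf (by simpa using h0))
  choose σ hσT c hc0 hfc using fun s (hs : s ∈ S) => (hT.2 (f s) (hfs s hs)).exists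
  have inj : ∀ s₁ (h₁ : s₁ ∈ S) s₂ (h₂ : s₂ ∈ S), σ s₁ h₁ = σ s₂ h₂ → s₁ = s₂ := by
    intro s₁ h₁ s₂ h₂ he
    have hc2 : c s₂ h₂ ≠ 0 := hc0 s₂ h₂
    have hfe : f s₁ = f ((c s₁ h₁ * (c s₂ h₂)⁻¹) • s₂) := by
      rw [map_smul, hfc s₂ h₂, hfc s₁ h₁, he, smul_smul,
        mul_assoc, inv_mul_cancel₀ hc2, mul_one]
    have hs12 : s₁ = (c s₁ h₁ * (c s₂ h₂)⁻¹) • s₂ := hf hfe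
    exact (hS.2 s₁ (hS0 s₁ h₁)).unique ⟨h₁, 1, one_ne_zero, (one_smul F s₁).symm⟩
      ⟨h₂, c s₁ h₁ * (c s₂ h₂)⁻¹, mul_ne_zero (hc0 s₁ h₁) (inv_ne_zero hc2), hs12⟩
  have surj : ∀ t ∈ T, ∃ s, ∃ hs : s ∈ S, σ s hs = t := by
    intro t ht
    have ht0 : t ≠ 0 := fun h0 => hT.1 (h0 ▸ ht)
    obtain ⟨w, hw⟩ := (Finite.injective_iff_surjective.mp hf) t
    have hw0 : w ≠ 0 := fun h0 => ht0 (by simpa [h0] using hw.symm)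
    obtain ⟨s, ⟨hs, e, he0, hwe⟩, -⟩ := hS.2 w hw0
    refine ⟨s, hs, ?_⟩
    have : t = (e * c s hs) • σ s hs := by
      rw [← hw, hwe, map_smul, hfc s hs, smul_smul]
    exact ((hT.2 t ht0).unique ⟨hσT s hs, e * c s hs,
      mul_ne_zero he0 (hc0 s hs), this⟩ ⟨ht, 1, one_ne_zero, (one_smul F t).symm⟩)
  refine ⟨∏ s ∈ S.attach, algebraMap F L (c s s.2), ?_, ?_⟩
  · refine Finset.prod_ne_zero_iff.mpr fun s _ => ?_
    exact fun h0 => hc0 s s.2 ((algebraMap F L).injective (by simpa using h0))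
  · intro h
    calc ∏ s ∈ S, h (f s)
        = ∏ s ∈ S.attach, (algebraMap F L (c s s.2) * h (σ s s.2)) := by
          rw [← Finset.prod_attach S fun s => h (f s)]
          refine Finset.prod_congr rfl fun s _ => ?_
          rw [hfc s s.2, map_smul, Algebra.smul_def]
      _ = (∏ s ∈ S.attach, algebraMap F L (c s s.2)) * ∏ s ∈ S.attach, h (σ s s.2) :=
          Finset.prod_mul_distrib
      _ = (∏ s ∈ S.attach, algebraMap F L (c s s.2)) * ∏ t ∈ T, h t := by
          congr 1
          refine Finset.prod_bij (fun a _ => σ a a.2) (fun a _ => hσT a a.2)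
            (fun a _ b _ hab => Subtype.ext (inj a a.2 b b.2 hab)) ?_ (fun a _ => rfl)
          intro t ht
          obtain ⟨s, hs, hst⟩ := surj t ht
          exact ⟨⟨s, hs⟩, Finset.mem_attach _ _, hst⟩

/-- The quantity `φ(g,S) = β_{g(S)}/β_S` is independent of the choice of the
representative system `S`, and `g ↦ φ(g)` is a group homomorphism `GL(W) → L^*`.
(Both assertions are stated in cross-multiplied form to avoid division.) -/
theorem phi_indep_and_hom {F L W : Type*} [Field F] [Fintype F] [Field L] [Algebra F L]
    [AddCommGroup W] [Module F W] [Fintype W] [DecidableEq W]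
    (α : W →ₗ[F] L) (hα : Function.Injective α) :
    (∀ S T : Finset W, IsProjRepSystem F S → IsProjRepSystem F T →
      ∀ g : W ≃ₗ[F] W,
        (∏ w ∈ S, α (g w)) * ∏ w ∈ T, α w = (∏ w ∈ T, α (g w)) * ∏ w ∈ S, α w) ∧
    (∀ S : Finset W, IsProjRepSystem F S → ∀ g g' : W ≃ₗ[F] W,
        (∏ w ∈ S, α ((g * g') w)) * ∏ w ∈ S, α w =
          (∏ w ∈ S, α (g w)) * ∏ w ∈ S, α (g' w)) := by
  constructor
  · intro S T hS hT g
    obtain ⟨d, hd, hprod⟩ := key (L := L) S T hS hT LinearMap.id Function.injective_id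
    have h1 := hprod (α.comp g.toLinearMap)
    have h2 := hprod α
    simp only [LinearMap.id_apply, LinearMap.comp_apply, LinearEquiv.coe_coe] at h1 h2
    rw [h1, h2]; ring
  · intro S hS g g'
    obtain ⟨d, hd, hprod⟩ := key (L := L) S S hS hS g'.toLinearMap g'.injective
    have h1 := hprod (α.comp g.toLinearMap)
    have h2 := hprod α
    simp only [LinearMap.comp_apply, LinearEquiv.coe_coe] at h1 h2
    have hmul : ∀ w : W, (g * g') w = g (g' w) := fun w => rfl
    simp only [hmul]
    rw [h1, h2]; ring
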